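/- For x > 0 and a loan α, the following are equivalent: (a) the linear span of S_x ∪ {α} contains no arbitrage; (b) α ∈ S_x; (c) −α(0) = Σ_{k≥1} α(k)/(1 + xk). In other words, S_x is saturated: adjoining any loan not in S_x creates an arbitrage. -/

import Mathlib

/-- The elementary loan `-1 + (1+mx)·yᵐ` of maturity `m`, simple interest rate `x`. -/
noncomputable def elemLoan (x : ℝ) (m : ℕ) : Polynomial ℝ :=
  Polynomial.C (1 + m * x) * Polynomial.X ^ m - 1

/-- The convex cone generated by the elementary loans of simple interest rate `x`:
the set of conical combinations of the `elemLoan x m`, `m ≥ 1`. -/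
noncomputable def Sx (x : ℝ) : Set (Polynomial ℝ) :=
  {α | ∃ (n : ℕ) (c : Fin n → ℝ) (m : Fin n → ℕ), 0 < n ∧ (∀ k, 0 < c k) ∧ (∀ k, 1 ≤ m k) ∧
    α = ∑ k, c k • elemLoan x (m k)}

/-- An arbitrage: a nonzero transaction with zero payment at time 0 and positive net gain. -/
def IsArbitrage (β : Polynomial ℝ) : Prop :=
  β ≠ 0 ∧ β.coeff 0 = 0 ∧ (∀ k ≥ 1, 0 ≤ β.coeff k) ∧
    0 < ∑ k ∈ Finset.Icc 1 β.natDegree, β.coeff k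

/-- A loan: negative principal at time 0, nonnegative installments whose sum is at
least the principal. -/
def IsLoan (α : Polynomial ℝ) : Prop :=
  α.coeff 0 < 0 ∧ (∀ k ≥ 1, 0 ≤ α.coeff k) ∧
    -α.coeff 0 ≤ ∑ k ∈ Finset.Icc 1 α.natDegree, α.coeff k

/-- The pricing functional: `p ↦ Σ p(k)/(1+xk)`, as a linear map. -/
noncomputable def Lx (x : ℝ) : Polynomial ℝ →ₗ[ℝ] ℝ :=
  Polynomial.lsum (fun k => (1 / (1 + x * k)) • (LinearMap.id : ℝ →ₗ[ℝ] ℝ))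

lemma one_add_pos {x : ℝ} (hx : 0 < x) (k : ℕ) : (0 : ℝ) < 1 + x * k := by
  have : (0 : ℝ) ≤ x * k := mul_nonneg hx.le (Nat.cast_nonneg k)
  linarith

lemma Lx_monomial (x : ℝ) (m : ℕ) (a : ℝ) :
    Lx x (Polynomial.monomial m a) = a / (1 + x * m) := by
  rw [Lx, Polynomial.lsum_apply, Polynomial.sum_monomial_index]
  · simp [div_eq_mul_inv, mul_comm]
  · simp

lemma Lx_elem {x : ℝ} (hx : 0 < x) (m : ℕ) : Lx x (elemLoan x m) = 0 := by
  have h := (one_add_pos hx m).ne'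
  have h1 : (1 : Polynomial ℝ) = Polynomial.monomial 0 1 := by simp
  rw [elemLoan, Polynomial.C_mul_X_pow_eq_monomial, map_sub, Lx_monomial, h1, Lx_monomial]
  push_cast
  field_simp
  ring

lemma range_succ_eq (d : ℕ) : Finset.range (d + 1) = insert 0 (Finset.Icc 1 d) := by
  ext k
  simp only [Finset.mem_range, Finset.mem_insert, Finset.mem_Icc, Nat.lt_succ_iff]
  omega

lemma Lx_split (x : ℝ) (p : Polynomial ℝ) :
    Lx x p = p.coeff 0 + ∑ k ∈ Finset.Icc 1 p.natDegree, p.coeff k / (1 + x * k) := by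
  have h1 : Lx x p = ∑ k ∈ Finset.range (p.natDegree + 1), p.coeff k / (1 + x * k) := by
    rw [Lx, Polynomial.lsum_apply, Polynomial.sum_def]
    rw [Finset.sum_subset (Polynomial.supp_subset_range (Nat.lt_succ_self _))]
    · exact Finset.sum_congr rfl fun k _ => by
        simp [div_eq_mul_inv, mul_comm]
    · intro k _ hk
      rw [Polynomial.notMem_support_iff.mp hk]
      simp
  rw [h1, range_succ_eq, Finset.sum_insert (by simp)]
  simp

lemma smul_elem {x : ℝ} (hx : 0 < x) (k : ℕ) (a : ℝ) :
    (a / (1 + x * k)) • elemLoan x k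
      = Polynomial.monomial k a - Polynomial.C (a / (1 + x * k)) := by
  have h := (one_add_pos hx k).ne'
  have h1 : (1 : Polynomial ℝ) = Polynomial.C 1 := by simp
  rw [elemLoan, Polynomial.C_mul_X_pow_eq_monomial, smul_sub, Polynomial.smul_monomial,
    h1, Polynomial.smul_C, smul_eq_mul, smul_eq_mul, mul_one]
  have h2 : a / (1 + x * k) * (1 + (k : ℝ) * x) = a := by
    rw [show (1 : ℝ) + (k : ℝ) * x = 1 + x * k by ring, div_mul_cancel₀ _ h]
  rw [h2]

lemma repr_eq {x : ℝ} (hx : 0 < x) (α : Polynomial ℝ) :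
    α = Polynomial.C (Lx x α) + ∑ k ∈ Finset.Icc 1 α.natDegree,
      (α.coeff k / (1 + x * k)) • elemLoan x k := by
  conv_lhs => rw [Polynomial.as_sum_range' α (α.natDegree + 1) (Nat.lt_succ_self _)]
  rw [range_succ_eq, Finset.sum_insert (by simp), Lx_split, map_add, map_sum]
  have : ∀ k ∈ Finset.Icc 1 α.natDegree,
      (α.coeff k / (1 + x * k)) • elemLoan x k
        = Polynomial.monomial k (α.coeff k) - Polynomial.C (α.coeff k / (1 + x * k)) :=
    fun k _ => smul_elem hx k (α.coeff k)
  rw [Finset.sum_congr rfl this, Finset.sum_sub_distrib]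
  simp only [Polynomial.monomial_zero_left]
  ring

lemma elemLoan_mem (x : ℝ) {m : ℕ} (hm : 1 ≤ m) : elemLoan x m ∈ Sx x :=
  ⟨1, fun _ => 1, fun _ => m, one_pos, fun _ => one_pos, fun _ => hm, by simp⟩

lemma Lx_Sx_zero {x : ℝ} (hx : 0 < x) {p : Polynomial ℝ} (hp : p ∈ Sx x) : Lx x p = 0 := by
  obtain ⟨n, c, m, _, _, _, rfl⟩ := hp
  rw [map_sum]
  exact Finset.sum_eq_zero fun k _ => by rw [map_smul, Lx_elem hx, smul_zero]

lemma Lx_span {x : ℝ} (hx : 0 < x) {α : Polynomial ℝ} (hαL : Lx x α = 0) {γ : Polynomial ℝ}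
    (hγ : γ ∈ Submodule.span ℝ (Sx x ∪ {α})) : Lx x γ = 0 := by
  induction hγ using Submodule.span_induction with
  | mem p hp =>
    rcases hp with hp | hp
    · exact Lx_Sx_zero hx hp
    · rw [Set.mem_singleton_iff] at hp; rw [hp]; exact hαL
  | zero => simp
  | add p q _ _ hp hq => rw [map_add, hp, hq, add_zero]
  | smul c p _ hp => rw [map_smul, hp, smul_zero]

lemma no_arb {x : ℝ} (hx : 0 < x) {γ : Polynomial ℝ} (h0 : Lx x γ = 0)
    (h : IsArbitrage γ) : False := by
  obtain ⟨hne, hc0, hpos, hsum⟩ := h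
  rw [Lx_split, hc0, zero_add] at h0
  have hall : ∀ k ∈ Finset.Icc 1 γ.natDegree, γ.coeff k / (1 + x * k) = 0 := by
    rw [← Finset.sum_eq_zero_iff_of_nonneg (fun k hk =>
      div_nonneg (hpos k (Finset.mem_Icc.mp hk).1) (one_add_pos hx k).le)]
    exact h0
  have hz : ∀ k ∈ Finset.Icc 1 γ.natDegree, γ.coeff k = 0 := by
    intro k hk
    have h1 := hall k hk
    have h2 := (one_add_pos hx k).ne'
    field_simp at h1
    simpa only [mul_zero] using h1
  rw [Finset.sum_eq_zero hz] at hsum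
  exact lt_irrefl 0 hsum

lemma mem_Sx_of_L {x : ℝ} (hx : 0 < x) {α : Polynomial ℝ} (hα : IsLoan α)
    (h0 : Lx x α = 0) : α ∈ Sx x := by
  set d := α.natDegree with hd
  set T := (Finset.Icc 1 d).filter (fun k => α.coeff k ≠ 0) with hT
  have hrepr : α = ∑ k ∈ T, (α.coeff k / (1 + x * k)) • elemLoan x k := by
    conv_lhs => rw [repr_eq hx α]
    rw [h0, map_zero, zero_add]
    symm
    apply Finset.sum_subset (Finset.filter_subset _ _)
    intro k hk hnk
    have hck : α.coeff k = 0 := by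
      by_contra hc
      exact hnk (Finset.mem_filter.mpr ⟨hk, hc⟩)
    simp [hck]
  have hsum : ∑ k ∈ Finset.Icc 1 d, α.coeff k / (1 + x * k) = -α.coeff 0 := by
    have h1 := Lx_split x α
    rw [h0] at h1
    rw [← hd] at h1
    linarith
  have hTne : T.Nonempty := by
    rcases Finset.eq_empty_or_nonempty T with h | h
    · exfalso
      have hz : ∑ k ∈ Finset.Icc 1 d, α.coeff k / (1 + x * k) = 0 :=
        Finset.sum_eq_zero fun k hk => by
          have hck : α.coeff k = 0 := by
            by_contra hc
            have : k ∈ T := Finset.mem_filter.mpr ⟨hk, hc⟩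
            simp [h] at this
          simp [hck]
      rw [hz] at hsum
      linarith [hα.1]
    · exact h
  refine ⟨T.card, fun i => α.coeff (T.equivFin.symm i : ℕ) / (1 + x * (T.equivFin.symm i : ℕ)),
    fun i => (T.equivFin.symm i : ℕ), Finset.card_pos.mpr hTne, ?_, ?_, ?_⟩
  · intro i
    have hk : (T.equivFin.symm i : ℕ) ∈ (Finset.Icc 1 d).filter (fun k => α.coeff k ≠ 0) :=
      (T.equivFin.symm i).2
    rw [Finset.mem_filter] at hk
    exact div_pos (lt_of_le_of_ne (hα.2.1 _ (Finset.mem_Icc.mp hk.1).1) (Ne.symm hk.2))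
      (one_add_pos hx _)
  · intro i
    have hk : (T.equivFin.symm i : ℕ) ∈ (Finset.Icc 1 d).filter (fun k => α.coeff k ≠ 0) :=
      (T.equivFin.symm i).2
    rw [Finset.mem_filter] at hk
    exact (Finset.mem_Icc.mp hk.1).1
  · conv_lhs => rw [hrepr]
    rw [← Finset.sum_coe_sort T (fun k => (α.coeff k / (1 + x * k)) • elemLoan x k)]
    exact (Equiv.sum_comp T.equivFin.symm
      (fun a : T => (α.coeff (a : ℕ) / (1 + x * (a : ℕ))) • elemLoan x (a : ℕ))).symm

theorem sx_saturated (x : ℝ) (hx : 0 < x) (α : Polynomial ℝ) (hα : IsLoan α) :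
    ((∀ γ ∈ Submodule.span ℝ (Sx x ∪ {α}), ¬ IsArbitrage γ) ↔ α ∈ Sx x) ∧
    (α ∈ Sx x ↔ -α.coeff 0 = ∑ k ∈ Finset.Icc 1 α.natDegree, α.coeff k / (1 + x * k)) := by
  have hL0_iff : Lx x α = 0 ↔
      -α.coeff 0 = ∑ k ∈ Finset.Icc 1 α.natDegree, α.coeff k / (1 + x * k) := by
    rw [Lx_split]
    constructor <;> intro h <;> linarith
  have hLc : α ∈ Sx x ↔
      -α.coeff 0 = ∑ k ∈ Finset.Icc 1 α.natDegree, α.coeff k / (1 + x * k) := by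
    constructor
    · intro h
      exact hL0_iff.mp (Lx_Sx_zero hx h)
    · intro h
      exact mem_Sx_of_L hx hα (hL0_iff.mpr h)
  refine ⟨⟨?_, ?_⟩, hLc⟩
  · -- no arbitrage → α ∈ Sx
    intro hno
    apply mem_Sx_of_L hx hα
    by_contra hc
    set c := Lx x α with hcdef
    -- C c belongs to the span
    have hαspan : α ∈ Submodule.span ℝ (Sx x ∪ {α}) :=
      Submodule.subset_span (Or.inr rfl)
    have helemspan : ∀ k : ℕ, 1 ≤ k → elemLoan x k ∈ Submodule.span ℝ (Sx x ∪ {α}) :=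
      fun k hk => Submodule.subset_span (Or.inl (elemLoan_mem x hk))
    have hCc : Polynomial.C c ∈ Submodule.span ℝ (Sx x ∪ {α}) := by
      have hre := repr_eq hx α
      have : Polynomial.C c = α - ∑ k ∈ Finset.Icc 1 α.natDegree,
          (α.coeff k / (1 + x * k)) • elemLoan x k := by
        rw [hcdef]
        exact eq_sub_of_add_eq hre.symm
      rw [this]
      refine Submodule.sub_mem _ hαspan (Submodule.sum_mem _ fun k hk => ?_)
      exact Submodule.smul_mem _ _ (helemspan k (Finset.mem_Icc.mp hk).1)
    set s : ℝ := if 0 < c then 1 else -1 with hs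
    have hsc : 0 < s * c := by
      rcases lt_trichotomy c 0 with h | h | h
      · rw [hs, if_neg (by linarith)]; nlinarith
      · exact absurd h hc
      · rw [hs, if_pos h]; nlinarith
    have hbase : Polynomial.C c + c • elemLoan x 1 = Polynomial.monomial 1 (c * (1 + x)) := by
      have h1 : (1 : Polynomial ℝ) = Polynomial.C 1 := by simp
      rw [elemLoan, Polynomial.C_mul_X_pow_eq_monomial, smul_sub, Polynomial.smul_monomial,
        h1, Polynomial.smul_C, smul_eq_mul, smul_eq_mul, mul_one]
      have h2 : c * (1 + (1 : ℕ) * x) = c * (1 + x) := by push_cast; ring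
      rw [h2]
      ring
    set b := s * c * (1 + x) with hb
    have hbpos : 0 < b := by nlinarith
    have hγspan : Polynomial.monomial 1 b ∈ Submodule.span ℝ (Sx x ∪ {α}) := by
      have heq : Polynomial.monomial 1 b = s • (Polynomial.C c + c • elemLoan x 1) := by
        rw [hbase, Polynomial.smul_monomial, smul_eq_mul]
        congr 1
        rw [hb]
        ring
      rw [heq]
      exact Submodule.smul_mem _ _ (Submodule.add_mem _ hCc
        (Submodule.smul_mem _ _ (helemspan 1 le_rfl)))
    refine hno _ hγspan ⟨?_, ?_, ?_, ?_⟩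
    · rw [Ne, Polynomial.monomial_eq_zero_iff]
      exact hbpos.ne'
    · simp [Polynomial.coeff_monomial]
    · intro k _
      rw [Polynomial.coeff_monomial]
      split
      · exact hbpos.le
      · exact le_refl 0
    · rw [Polynomial.natDegree_monomial]
      rw [if_neg hbpos.ne']
      simp [Polynomial.coeff_monomial, hbpos]
  · -- α ∈ Sx → no arbitrage
    intro hmem γ hγ harb
    exact no_arb hx (Lx_span hx (Lx_Sx_zero hx hmem) hγ) harb
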